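/- The Minkowski question mark function is continuous on [0,1]. -/

import Mathlib

open MeasureTheory Set

/-- The Gauss map `x ↦ 1/x mod 1` (with `0 ↦ 0`). -/
noncomputable def gaussMap (x : ℝ) : ℝ := if x = 0 then 0 else Int.fract x⁻¹

/-- The `(k+1)`-st continued fraction partial quotient `a_{k+1}(x)`. -/
noncomputable def cfDigit (k : ℕ) (x : ℝ) : ℕ := ⌊(gaussMap^[k] x)⁻¹⌋₊

/-- `cfSum n x = a_1(x) + ⋯ + a_n(x)`. -/
noncomputable def cfSum (n : ℕ) (x : ℝ) : ℕ := ∑ i ∈ Finset.range n, cfDigit i x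

/-- Minkowski's question mark function, defined by Salem's series
`?(x) = Σ_{k≥1} (-1)^{k-1} 2^{1-(a_1+⋯+a_k)}`, which is a finite sum for rational `x`
(the terms are cut off once the Gauss-map orbit reaches `0`). -/
noncomputable def mink (x : ℝ) : ℝ :=
  ∑' k : ℕ, if gaussMap^[k] x = 0 then 0 else
    (-1 : ℝ) ^ k * (2 : ℝ) ^ ((1 : ℤ) - (cfSum (k + 1) x : ℤ))

open Filter Topology

noncomputable def F (x : ℝ) (k : ℕ) : ℝ :=
  if gaussMap^[k] x = 0 then 0 else (-1 : ℝ) ^ k * (2 : ℝ) ^ ((1 : ℤ) - (cfSum (k + 1) x : ℤ))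

lemma mink_eq (x : ℝ) : mink x = ∑' k, F x k := rfl

lemma two_zpow_neg (d : ℕ) : (2:ℝ) ^ (-(d:ℤ)) = (1/2)^d := by
  rw [zpow_neg, zpow_natCast, one_div, inv_pow]

lemma two_zpow_one_sub (d : ℕ) : (2:ℝ) ^ ((1:ℤ) - (d:ℤ)) = 2 * (1/2)^d := by
  rw [sub_eq_add_neg, zpow_add₀ (two_ne_zero), zpow_one, two_zpow_neg]

lemma gaussMap_mem (x : ℝ) : gaussMap x ∈ Ico (0:ℝ) 1 := by
  unfold gaussMap; split
  · exact ⟨le_refl 0, one_pos⟩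
  · exact ⟨Int.fract_nonneg _, Int.fract_lt_one _⟩

lemma gaussMap_zero : gaussMap 0 = 0 := by simp [gaussMap]

lemma iterate_zero_eq (k : ℕ) : gaussMap^[k] 0 = 0 := Function.iterate_fixed gaussMap_zero k

lemma orbit_mem {x : ℝ} (hx : x ∈ Icc (0:ℝ) 1) (k : ℕ) : gaussMap^[k] x ∈ Icc (0:ℝ) 1 := by
  cases k with
  | zero => exact hx
  | succ n =>
    rw [Function.iterate_succ_apply']
    exact Ico_subset_Icc_self (gaussMap_mem _)

lemma orbit_ne_zero {x : ℝ} {j k : ℕ} (h : j ≤ k) (hk : gaussMap^[k] x ≠ 0) :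
    gaussMap^[j] x ≠ 0 := by
  intro h0
  apply hk
  obtain ⟨m, rfl⟩ := Nat.exists_eq_add_of_le h
  rw [add_comm, Function.iterate_add_apply, h0, iterate_zero_eq]

lemma digit_pos {x : ℝ} (hx : x ∈ Icc (0:ℝ) 1) {k : ℕ} (h : gaussMap^[k] x ≠ 0) :
    1 ≤ cfDigit k x := by
  have hm := orbit_mem hx k
  have h1 : 0 < gaussMap^[k] x := lt_of_le_of_ne hm.1 (Ne.symm h)
  have h2 : (1:ℝ) ≤ (gaussMap^[k] x)⁻¹ := one_le_inv_iff₀.mpr ⟨h1, hm.2⟩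
  exact Nat.le_floor (by exact_mod_cast h2)

lemma cfSum_ge {x : ℝ} (hx : x ∈ Icc (0:ℝ) 1) {k : ℕ} (h : gaussMap^[k] x ≠ 0) :
    k + 1 ≤ cfSum (k+1) x := by
  have : ∀ i ∈ Finset.range (k+1), 1 ≤ cfDigit i x := by
    intro i hi
    have hik : i ≤ k := by simpa [Nat.lt_succ_iff] using hi
    exact digit_pos hx (orbit_ne_zero hik h)
  calc k + 1 = ∑ _i ∈ Finset.range (k+1), 1 := by
        rw [Finset.sum_const, Finset.card_range, smul_eq_mul, mul_one]
  _ ≤ cfSum (k+1) x := Finset.sum_le_sum this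

lemma F_bound {x : ℝ} (hx : x ∈ Icc (0:ℝ) 1) (k : ℕ) : |F x k| ≤ (1/2)^k := by
  unfold F
  split
  · rw [abs_zero]; positivity
  · rename_i h
    rw [abs_mul, abs_pow, abs_neg, abs_one, one_pow, one_mul,
      abs_of_pos (zpow_pos (by norm_num : (0:ℝ) < 2) _)]
    have hs : (k:ℤ) + 1 ≤ (cfSum (k+1) x : ℤ) := by exact_mod_cast cfSum_ge hx h
    calc (2:ℝ) ^ ((1:ℤ) - (cfSum (k+1) x : ℤ)) ≤ (2:ℝ) ^ (-(k:ℤ)) := by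
          apply zpow_le_zpow_right₀ (by norm_num : (1:ℝ) ≤ 2); omega
    _ = (1/2)^k := two_zpow_neg k

lemma summable_F {x : ℝ} (hx : x ∈ Icc (0:ℝ) 1) : Summable (F x) :=
  Summable.of_norm_bounded summable_geometric_two
    (fun k => by rw [Real.norm_eq_abs]; exact F_bound hx k)

lemma abs_mink_le {x : ℝ} (hx : x ∈ Icc (0:ℝ) 1) : |mink x| ≤ 2 := by
  rw [mink_eq]
  have h1 : Summable fun k => ‖F x k‖ :=
    Summable.of_nonneg_of_le (fun k => norm_nonneg _)
      (fun k => by rw [Real.norm_eq_abs]; exact F_bound hx k) summable_geometric_two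
  calc |∑' k, F x k| ≤ ∑' k, ‖F x k‖ := by
        rw [← Real.norm_eq_abs]; exact norm_tsum_le_tsum_norm h1
  _ ≤ ∑' k, (1/2:ℝ)^k := Summable.tsum_le_tsum
        (fun k => by rw [Real.norm_eq_abs]; exact F_bound hx k) h1 summable_geometric_two
  _ = 2 := tsum_geometric_two

lemma mink_zero : mink 0 = 0 := by
  rw [mink_eq]
  have : ∀ k, F 0 k = 0 := by intro k; unfold F; rw [if_pos (iterate_zero_eq k)]
  simp [this]

lemma digit_zero_eq (x : ℝ) : cfDigit 0 x = ⌊x⁻¹⌋₊ := by simp [cfDigit]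

lemma digit_shift (x : ℝ) (k : ℕ) : cfDigit (k+1) x = cfDigit k (gaussMap x) := by
  unfold cfDigit; rw [Function.iterate_succ_apply]

lemma mink_step {x : ℝ} (hx : x ∈ Icc (0:ℝ) 1) (hx0 : x ≠ 0) :
    mink x = 2 ^ ((1:ℤ) - (⌊x⁻¹⌋₊:ℤ)) - 2 ^ (-(⌊x⁻¹⌋₊:ℤ)) * mink (gaussMap x) := by
  have hsum := summable_F hx
  rw [mink_eq, hsum.tsum_eq_zero_add]
  have h0 : F x 0 = 2 ^ ((1:ℤ) - (⌊x⁻¹⌋₊:ℤ)) := by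
    unfold F
    rw [if_neg (by simpa using hx0)]
    simp [cfSum, Finset.sum_range_one, digit_zero_eq]
  have hshift : ∀ k, F x (k+1) = (-(2:ℝ) ^ (-(⌊x⁻¹⌋₊:ℤ))) * F (gaussMap x) k := by
    intro k
    unfold F
    rw [Function.iterate_succ_apply]
    split
    · simp
    · have e3 : cfSum (k+1+1) x = cfSum (k+1) (gaussMap x) + ⌊x⁻¹⌋₊ := by
        show (∑ i ∈ Finset.range (k+1+1), cfDigit i x) = _
        rw [Finset.sum_range_succ' (fun i => cfDigit i x) (k+1)]
        simp only [digit_shift, digit_zero_eq, cfSum]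
      have hcs : (cfSum (k+1+1) x : ℤ) = (⌊x⁻¹⌋₊ : ℤ) + (cfSum (k+1) (gaussMap x) : ℤ) := by
        rw [e3]; push_cast; ring
      have he : (1:ℤ) - (cfSum (k+1+1) x : ℤ) =
          (-(⌊x⁻¹⌋₊:ℤ)) + ((1:ℤ) - (cfSum (k+1) (gaussMap x) : ℤ)) := by rw [hcs]; ring
      rw [he, zpow_add₀ (two_ne_zero : (2:ℝ) ≠ 0), pow_succ]
      ring
  rw [tsum_congr hshift, tsum_mul_left, h0, ← mink_eq]
  ring

lemma mink_one : mink 1 = 1 := by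
  have h := mink_step (x := 1) (by constructor <;> norm_num) one_ne_zero
  have h1 : gaussMap 1 = 0 := by
    unfold gaussMap; rw [if_neg one_ne_zero]; norm_num
  rw [h1, mink_zero] at h
  norm_num at h
  exact h

lemma mink_est : ∀ n : ℕ, ∀ x ∈ Icc (0:ℝ) 1, ∀ y ∈ Icc (0:ℝ) 1,
    (∀ k < n, cfDigit k x = cfDigit k y) → |mink x - mink y| ≤ 4 * (1/2)^n := by
  intro n
  induction n with
  | zero =>
    intro x hx y hy _
    calc |mink x - mink y| ≤ |mink x| + |mink y| := abs_sub _ _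
    _ ≤ 2 + 2 := add_le_add (abs_mink_le hx) (abs_mink_le hy)
    _ ≤ 4 * (1/2)^0 := by norm_num
  | succ n ih =>
    intro x hx y hy hd
    have hd0 : cfDigit 0 x = cfDigit 0 y := hd 0 (Nat.succ_pos n)
    by_cases hx0 : x = 0
    · have hy0 : y = 0 := by
        by_contra hy0
        have h1 : 1 ≤ cfDigit 0 y := digit_pos hy (by simpa using hy0)
        have h2 : cfDigit 0 x = 0 := by
          rw [digit_zero_eq, hx0]; simp
        omega
      rw [hx0, hy0]; simp only [sub_self, abs_zero]; positivity
    by_cases hy0 : y = 0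
    · exfalso
      have h1 : 1 ≤ cfDigit 0 x := digit_pos hx (by simpa using hx0)
      have h2 : cfDigit 0 y = 0 := by rw [digit_zero_eq, hy0]; simp
      omega
    · have hgx : gaussMap x ∈ Icc (0:ℝ) 1 := Ico_subset_Icc_self (gaussMap_mem x)
      have hgy : gaussMap y ∈ Icc (0:ℝ) 1 := Ico_subset_Icc_self (gaussMap_mem y)
      have hdg : ∀ k < n, cfDigit k (gaussMap x) = cfDigit k (gaussMap y) := by
        intro k hk
        rw [← digit_shift, ← digit_shift]
        exact hd (k+1) (by omega)
      have hIH := ih (gaussMap x) hgx (gaussMap y) hgy hdg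
      have hde : ⌊x⁻¹⌋₊ = ⌊y⁻¹⌋₊ := by
        rw [← digit_zero_eq, ← digit_zero_eq]; exact hd0
      rw [mink_step hx hx0, mink_step hy hy0, ← hde]
      have heq : (2:ℝ) ^ ((1:ℤ) - (⌊x⁻¹⌋₊:ℤ)) - 2 ^ (-(⌊x⁻¹⌋₊:ℤ)) * mink (gaussMap x)
          - (2 ^ ((1:ℤ) - (⌊x⁻¹⌋₊:ℤ)) - 2 ^ (-(⌊x⁻¹⌋₊:ℤ)) * mink (gaussMap y))
          = 2 ^ (-(⌊x⁻¹⌋₊:ℤ)) * (mink (gaussMap y) - mink (gaussMap x)) := by ring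
      rw [heq, abs_mul, abs_of_pos (zpow_pos (by norm_num : (0:ℝ) < 2) _)]
      have hd1 : 1 ≤ ⌊x⁻¹⌋₊ := by
        rw [← digit_zero_eq]; exact digit_pos hx (by simpa using hx0)
      have hc : (2:ℝ) ^ (-(⌊x⁻¹⌋₊:ℤ)) ≤ 1/2 := by
        rw [two_zpow_neg]
        calc ((1:ℝ)/2) ^ ⌊x⁻¹⌋₊ ≤ (1/2)^1 :=
          pow_le_pow_of_le_one (by norm_num) (by norm_num) hd1
        _ = 1/2 := pow_one _
      have habs : |mink (gaussMap y) - mink (gaussMap x)| ≤ 4 * (1/2)^n := by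
        rw [abs_sub_comm]; exact hIH
      calc (2:ℝ) ^ (-(⌊x⁻¹⌋₊:ℤ)) * |mink (gaussMap y) - mink (gaussMap x)|
          ≤ (1/2) * (4 * (1/2)^n) := by
            apply mul_le_mul hc habs (abs_nonneg _) (by norm_num)
      _ = 4 * (1/2)^(n+1) := by ring

lemma gaussMap_ne {t : ℝ} (ht : t ≠ 0) : gaussMap t = Int.fract t⁻¹ := if_neg ht

lemma fract_floor_window {r : ℝ} {a : ℕ} (h1 : (a:ℝ) ≤ r) (h2 : r < a + 1) :
    Int.fract r = r - a ∧ ⌊r⌋₊ = a := by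
  constructor
  · have hf : ⌊r⌋ = (a:ℤ) := by
      apply Int.floor_eq_iff.mpr
      constructor
      · exact_mod_cast h1
      · exact_mod_cast h2
    rw [Int.fract, hf]
    norm_num
  · refine (Nat.floor_eq_iff ?_).mpr ⟨h1, h2⟩
    exact le_trans (by positivity) h1

lemma eventually_digit0 {t : ℝ} (ht : 0 < t) (hfr : Int.fract t⁻¹ ≠ 0) :
    (∀ᶠ s in 𝓝 t, s ≠ 0 ∧ ⌊s⁻¹⌋₊ = ⌊t⁻¹⌋₊) ∧ ContinuousAt gaussMap t := by
  set r := t⁻¹ with hr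
  have hrpos : 0 < r := inv_pos.mpr ht
  have hne : r ≠ (⌊r⌋₊ : ℝ) := by
    intro h
    apply hfr
    rw [h, Int.fract_natCast]
  have h1 : (⌊r⌋₊ : ℝ) < r := lt_of_le_of_ne (Nat.floor_le hrpos.le) (Ne.symm hne)
  have h2 : r < ⌊r⌋₊ + 1 := Nat.lt_floor_add_one r
  have hinv : ContinuousAt (fun s : ℝ => s⁻¹) t := continuousAt_inv₀ ht.ne'
  have hev1 : ∀ᶠ s in 𝓝 t, s⁻¹ ∈ Ioo ((⌊r⌋₊:ℝ)) (⌊r⌋₊ + 1) :=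
    hinv.eventually_mem (Ioo_mem_nhds h1 h2)
  have hev0 : ∀ᶠ s in 𝓝 t, s ≠ 0 :=
    eventually_ne_nhds ht.ne'
  constructor
  · filter_upwards [hev1, hev0] with s hs hs0
    refine ⟨hs0, ?_⟩
    have := (fract_floor_window hs.1.le hs.2).2
    rw [this]
  · have hZ : r ≠ (⌊r⌋ : ℝ) := by
      intro h
      apply hfr
      rw [h, Int.fract_intCast]
    have hfc : ContinuousAt Int.fract r := continuousAt_fract hZ
    have : ContinuousAt (fun s : ℝ => Int.fract s⁻¹) t := hfc.comp hinv
    apply this.congr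
    filter_upwards [hev0] with s hs0
    exact (gaussMap_ne hs0).symm

lemma orbit_cont {x : ℝ} (hx : x ∈ Icc (0:ℝ) 1) (h : ∀ k, gaussMap^[k] x ≠ 0) (n : ℕ) :
    ContinuousAt (gaussMap^[n]) x ∧
      ∀ᶠ y in 𝓝 x, ∀ k < n, cfDigit k y = cfDigit k x := by
  induction n with
  | zero =>
    refine ⟨by simpa [Function.iterate_zero] using continuousAt_id, ?_⟩
    filter_upwards with y k hk
    omega
  | succ n ih =>
    have ht0 : gaussMap^[n] x ≠ 0 := h n
    have htpos : 0 < gaussMap^[n] x :=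
      lt_of_le_of_ne (orbit_mem hx n).1 (Ne.symm ht0)
    have hfr : Int.fract (gaussMap^[n] x)⁻¹ ≠ 0 := by
      have := h (n+1)
      rw [Function.iterate_succ_apply'] at this
      rwa [gaussMap_ne ht0] at this
    obtain ⟨hev, hcg⟩ := eventually_digit0 htpos hfr
    have hcont : ContinuousAt (gaussMap^[n+1]) x := by
      rw [Function.iterate_succ']
      exact hcg.comp ih.1
    refine ⟨hcont, ?_⟩
    have hdn : ∀ᶠ y in 𝓝 x, cfDigit n y = cfDigit n x := by
      have := ih.1.eventually hev
      filter_upwards [this] with y hy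
      unfold cfDigit
      exact hy.2
    filter_upwards [ih.2, hdn] with y h1 h2 k hk
    rcases Nat.lt_succ_iff_lt_or_eq.mp hk with hk' | rfl
    · exact h1 k hk'
    · exact h2

lemma mink_small {y : ℝ} (hy : y ∈ Icc (0:ℝ) 1) (hy0 : y ≠ 0) :
    |mink y| ≤ 4 * (1/2) ^ ⌊y⁻¹⌋₊ := by
  rw [mink_step hy hy0]
  have h2 : |mink (gaussMap y)| ≤ 2 := abs_mink_le (Ico_subset_Icc_self (gaussMap_mem y))
  rw [two_zpow_one_sub, two_zpow_neg]
  set c := ((1:ℝ)/2) ^ ⌊y⁻¹⌋₊ with hc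
  have hcpos : 0 < c := by positivity
  calc |2 * c - c * mink (gaussMap y)| ≤ |2 * c| + |c * mink (gaussMap y)| := abs_sub _ _
  _ = 2 * c + c * |mink (gaussMap y)| := by
      rw [abs_mul, abs_mul, abs_of_pos hcpos]
      norm_num
  _ ≤ 2 * c + c * 2 := by nlinarith
  _ = 4 * c := by ring

lemma tendsto_mink_zero : Filter.Tendsto mink (𝓝[Icc (0:ℝ) 1] 0) (𝓝 0) := by
  rw [Metric.tendsto_nhds]
  intro ε hε
  obtain ⟨m, hm⟩ : ∃ m : ℕ, ((1:ℝ)/2) ^ m < ε / 4 :=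
    exists_pow_lt_of_lt_one (by positivity) (by norm_num)
  have hmem : Ioo (-(1/(m+1)) : ℝ) (1/(m+1)) ∈ 𝓝[Icc (0:ℝ) 1] (0:ℝ) := by
    apply nhdsWithin_le_nhds
    exact Ioo_mem_nhds (neg_lt_zero.mpr (by positivity)) (by positivity)
  filter_upwards [hmem, self_mem_nhdsWithin] with y hy hyI
  rw [Real.dist_eq, sub_zero]
  by_cases hy0 : y = 0
  · rw [hy0, mink_zero]; simpa using hε
  · have hypos : 0 < y := lt_of_le_of_ne hyI.1 (Ne.symm hy0)
    have hlt : y < 1/(m+1) := hy.2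
    have h3 : y * ((m:ℝ)+1) < 1 := by
      rw [lt_div_iff₀ (show (0:ℝ) < (m:ℝ)+1 by positivity)] at hlt
      linarith
    have hyy : y * y⁻¹ = 1 := mul_inv_cancel₀ hy0
    have hinv : (m:ℝ) + 1 ≤ y⁻¹ := by nlinarith [inv_pos.mpr hypos]
    have hfl : m + 1 ≤ ⌊y⁻¹⌋₊ := Nat.le_floor (by exact_mod_cast hinv)
    calc |mink y| ≤ 4 * (1/2) ^ ⌊y⁻¹⌋₊ := mink_small hyI hy0
    _ ≤ 4 * (1/2) ^ (m+1) :=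
        mul_le_mul_of_nonneg_left
          (pow_le_pow_of_le_one (by norm_num) (by norm_num) hfl) (by norm_num)
    _ < ε := by
        have : ((1:ℝ)/2) ^ (m+1) ≤ (1/2)^m := pow_le_pow_of_le_one (by norm_num) (by norm_num) (by omega)
        nlinarith

lemma contWithin_irr {x : ℝ} (hx : x ∈ Icc (0:ℝ) 1) (h : ∀ k, gaussMap^[k] x ≠ 0) :
    ContinuousWithinAt mink (Icc (0:ℝ) 1) x := by
  show Filter.Tendsto mink (𝓝[Icc (0:ℝ) 1] x) (𝓝 (mink x))
  rw [Metric.tendsto_nhds]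
  intro ε hε
  obtain ⟨n, hn⟩ : ∃ n : ℕ, ((1:ℝ)/2)^n < ε/4 :=
    exists_pow_lt_of_lt_one (by positivity) (by norm_num)
  have hev := (orbit_cont hx h n).2
  filter_upwards [hev.filter_mono nhdsWithin_le_nhds, self_mem_nhdsWithin] with y hy hyI
  rw [Real.dist_eq]
  calc |mink y - mink x| ≤ 4*(1/2)^n := mink_est n y hyI x hx hy
  _ < ε := by linarith

lemma tendsto_mink_one : Filter.Tendsto mink (𝓝[Icc (0:ℝ) 1] 1) (𝓝 1) := by
  set S : Set ℝ := Icc (0:ℝ) 1 ∩ Ioi (1/2) with hS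
  have hrw : 𝓝[Icc (0:ℝ) 1] (1:ℝ) = 𝓝[S] 1 :=
    nhdsWithin_restrict' _ (isOpen_Ioi.mem_nhds (by norm_num))
  rw [hrw]
  have key : ∀ x ∈ S, (1:ℝ) ≤ x⁻¹ ∧ x⁻¹ < 2 ∧ x ≠ 0 := by
    intro x hxS
    have hx2 : (1:ℝ)/2 < x := hxS.2
    have hxpos : 0 < x := lt_trans (by norm_num) hx2
    have hinv1 : (1:ℝ) ≤ x⁻¹ := one_le_inv_iff₀.mpr ⟨hxpos, hxS.1.2⟩
    have hinv2 : x⁻¹ < 2 := by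
      have hxx : x * x⁻¹ = 1 := mul_inv_cancel₀ hxpos.ne'
      nlinarith
    exact ⟨hinv1, hinv2, hxpos.ne'⟩
  have heq : ∀ x ∈ S, mink x = 1 - 2⁻¹ * mink (x⁻¹ - 1) := by
    intro x hxS
    obtain ⟨h1, h2, h0⟩ := key x hxS
    have hw := fract_floor_window (a := 1) (by exact_mod_cast h1) (by exact_mod_cast h2)
    have := mink_step hxS.1 h0
    rw [hw.2] at this
    rw [gaussMap_ne h0, hw.1] at this
    rw [this]
    norm_num
  have hφ : Filter.Tendsto (fun x : ℝ => x⁻¹ - 1) (𝓝[S] 1) (𝓝[Icc (0:ℝ) 1] 0) := by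
    rw [tendsto_nhdsWithin_iff]
    constructor
    · have hc : ContinuousAt (fun x : ℝ => x⁻¹ - 1) 1 :=
        (continuousAt_inv₀ one_ne_zero).sub continuousAt_const
      have := hc.tendsto.mono_left (nhdsWithin_le_nhds (s := S))
      simpa using this
    · filter_upwards [self_mem_nhdsWithin] with x hxS
      obtain ⟨h1, h2, _⟩ := key x hxS
      exact ⟨by linarith, by linarith⟩
  have Htend : Filter.Tendsto (fun x : ℝ => 1 - 2⁻¹ * mink (x⁻¹ - 1)) (𝓝[S] 1) (𝓝 1) := by
    have h2 : Filter.Tendsto (fun x : ℝ => mink (x⁻¹ - 1)) (𝓝[S] 1) (𝓝 0) :=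
      tendsto_mink_zero.comp hφ
    have := (tendsto_const_nhds (x := (1:ℝ)) (f := 𝓝[S] (1:ℝ))).sub
      ((tendsto_const_nhds (x := (2⁻¹:ℝ))).mul h2)
    simpa using this
  apply Htend.congr'
  filter_upwards [self_mem_nhdsWithin] with x hxS
  exact (heq x hxS).symm

lemma contWithin_inv {a : ℕ} (ha : 1 ≤ a) :
    ContinuousWithinAt mink (Icc (0:ℝ) 1) ((a:ℝ)⁻¹) := by
  have hapos : (0:ℝ) < a := by exact_mod_cast ha
  set x₀ : ℝ := (a:ℝ)⁻¹ with hx₀def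
  have hx₀pos : 0 < x₀ := inv_pos.mpr hapos
  have hx₀le : x₀ ≤ 1 := by
    rw [hx₀def]
    rw [inv_le_one_iff₀]
    right; exact_mod_cast ha
  have hx₀ : x₀ ∈ Icc (0:ℝ) 1 := ⟨hx₀pos.le, hx₀le⟩
  have hinv₀ : x₀⁻¹ = (a:ℝ) := by rw [hx₀def, inv_inv]
  have hfl : ⌊x₀⁻¹⌋₊ = a := by rw [hinv₀, Nat.floor_natCast]
  have hg0 : gaussMap x₀ = 0 := by
    rw [gaussMap_ne hx₀pos.ne', hinv₀, Int.fract_natCast]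
  have hmv : mink x₀ = 2 ^ ((1:ℤ) - (a:ℤ)) := by
    rw [mink_step hx₀ hx₀pos.ne', hfl, hg0, mink_zero, mul_zero, sub_zero]
  -- Left part
  have hleft : ContinuousWithinAt mink (Icc (0:ℝ) x₀) x₀ := by
    show Filter.Tendsto mink (𝓝[Icc (0:ℝ) x₀] x₀) (𝓝 (mink x₀))
    have hlt : ((a:ℝ)+1)⁻¹ < x₀ := by
      rw [hx₀def]
      gcongr
      linarith
    have hrw : 𝓝[Icc (0:ℝ) x₀] x₀ = 𝓝[Icc (0:ℝ) x₀ ∩ Ioi (((a:ℝ)+1)⁻¹)] x₀ :=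
      nhdsWithin_restrict' _ (isOpen_Ioi.mem_nhds hlt)
    rw [hrw]
    set T : Set ℝ := Icc (0:ℝ) x₀ ∩ Ioi (((a:ℝ)+1)⁻¹) with hT
    have key : ∀ x ∈ T, 0 < x ∧ (a:ℝ) ≤ x⁻¹ ∧ x⁻¹ < a + 1 := by
      intro x hxT
      have hxpos : 0 < x := lt_trans (by positivity) hxT.2
      have h5 : ((a:ℝ)⁻¹)⁻¹ ≤ x⁻¹ := by
        gcongr
        exact hxT.1.2
      rw [inv_inv] at h5
      have h6 : x⁻¹ < (((a:ℝ)+1)⁻¹)⁻¹ := by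
        gcongr
        exact hxT.2
      rw [inv_inv] at h6
      exact ⟨hxpos, h5, h6⟩
    have heq : ∀ x ∈ T, mink x = 2^((1:ℤ)-(a:ℤ)) - 2^(-(a:ℤ)) * mink (x⁻¹ - a) := by
      intro x hxT
      obtain ⟨hxpos, h5, h6⟩ := key x hxT
      have hw := fract_floor_window h5 h6
      have hxI : x ∈ Icc (0:ℝ) 1 := ⟨hxpos.le, le_trans hxT.1.2 hx₀le⟩
      have := mink_step hxI hxpos.ne'
      rw [hw.2, gaussMap_ne hxpos.ne', hw.1] at this
      exact this
    have hφ : Filter.Tendsto (fun x : ℝ => x⁻¹ - a) (𝓝[T] x₀) (𝓝[Icc (0:ℝ) 1] 0) := by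
      rw [tendsto_nhdsWithin_iff]
      constructor
      · have hc : ContinuousAt (fun x : ℝ => x⁻¹ - a) x₀ :=
          (continuousAt_inv₀ hx₀pos.ne').sub continuousAt_const
        have h7 := hc.tendsto.mono_left (nhdsWithin_le_nhds (s := T))
        rw [hinv₀] at h7
        simpa using h7
      · filter_upwards [self_mem_nhdsWithin] with x hxT
        obtain ⟨_, h5, h6⟩ := key x hxT
        exact ⟨by linarith, by linarith⟩
    have Htend : Filter.Tendsto (fun x : ℝ => 2^((1:ℤ)-(a:ℤ)) - 2^(-(a:ℤ)) * mink (x⁻¹ - a))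
        (𝓝[T] x₀) (𝓝 (mink x₀)) := by
      have h2 : Filter.Tendsto (fun x : ℝ => mink (x⁻¹ - a)) (𝓝[T] x₀) (𝓝 0) :=
        tendsto_mink_zero.comp hφ
      have := (tendsto_const_nhds (x := (2:ℝ)^((1:ℤ)-(a:ℤ))) (f := 𝓝[T] x₀)).sub
        ((tendsto_const_nhds (x := (2:ℝ)^(-(a:ℤ)))).mul h2)
      rw [mul_zero, sub_zero] at this
      rw [hmv]
      exact this
    apply Htend.congr'
    filter_upwards [self_mem_nhdsWithin] with x hxT
    exact (heq x hxT).symm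
  -- Right part
  have hright : ContinuousWithinAt mink (Icc x₀ 1) x₀ := by
    by_cases ha1 : a = 1
    · have hx1 : x₀ = 1 := by rw [hx₀def, ha1]; norm_num
      rw [hx1, Icc_self]
      exact continuousWithinAt_singleton
    · obtain ⟨b, rfl⟩ : ∃ b : ℕ, a = b + 1 := ⟨a - 1, by omega⟩
      have hb : 1 ≤ b := by omega
      have hbpos : (0:ℝ) < b := by exact_mod_cast hb
      show Filter.Tendsto mink (𝓝[Icc x₀ 1] x₀) (𝓝 (mink x₀))
      have hca : ((b:ℕ)+1 : ℝ) = ((b:ℝ)+1) := by push_cast; ring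
      have hlt : x₀ < ((b:ℝ))⁻¹ := by
        rw [hx₀def]
        gcongr
        push_cast
        linarith
      have hrw : 𝓝[Icc x₀ 1] x₀ = 𝓝[Icc x₀ 1 ∩ Iio ((b:ℝ)⁻¹)] x₀ :=
        nhdsWithin_restrict' _ (isOpen_Iio.mem_nhds hlt)
      rw [hrw]
      set T : Set ℝ := Icc x₀ 1 ∩ Iio ((b:ℝ)⁻¹) with hT
      have key : ∀ x ∈ T, 0 < x ∧ (b:ℝ) < x⁻¹ ∧ x⁻¹ ≤ b + 1 := by
        intro x hxT
        have hxpos : 0 < x := lt_of_lt_of_le hx₀pos hxT.1.1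
        have h5 : x⁻¹ ≤ ((b:ℝ)+1) := by
          have : (((b:ℝ)+1)⁻¹)⁻¹ = ((b:ℝ)+1) := inv_inv _
          rw [← this]
          gcongr
          have h9 := hxT.1.1
          rw [hx₀def] at h9
          push_cast at h9
          exact h9
        have h6 : (b:ℝ) < x⁻¹ := by
          have : ((b:ℝ)⁻¹)⁻¹ = (b:ℝ) := inv_inv _
          rw [← this]
          gcongr
          exact hxT.2
        exact ⟨hxpos, h6, h5⟩
      have heq : ∀ x ∈ T, mink x = 2^((1:ℤ)-(b:ℤ)) - 2^(-(b:ℤ)) * mink (x⁻¹ - b) := by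
        intro x hxT
        obtain ⟨hxpos, h6, h5⟩ := key x hxT
        by_cases hxx : x = x₀
        · rw [hxx]
          have e1 : x₀⁻¹ - (b:ℝ) = 1 := by rw [hinv₀]; push_cast; ring
          rw [e1, mink_one, mul_one, hmv, two_zpow_one_sub, two_zpow_one_sub,
            two_zpow_neg, pow_succ]
          ring
        · have hxgt : x₀ < x := lt_of_le_of_ne hxT.1.1 (Ne.symm hxx)
          have h7 : x⁻¹ < (b:ℝ) + 1 := by
            have h8 : x⁻¹ < x₀⁻¹ := by gcongr
            rw [hinv₀] at h8
            push_cast at h8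
            linarith
          have hw := fract_floor_window h6.le h7
          have hxI : x ∈ Icc (0:ℝ) 1 := ⟨hxpos.le, hxT.1.2⟩
          have := mink_step hxI hxpos.ne'
          rw [hw.2, gaussMap_ne hxpos.ne', hw.1] at this
          exact this
      have hφ : Filter.Tendsto (fun x : ℝ => x⁻¹ - b) (𝓝[T] x₀) (𝓝[Icc (0:ℝ) 1] 1) := by
        rw [tendsto_nhdsWithin_iff]
        constructor
        · have hc : ContinuousAt (fun x : ℝ => x⁻¹ - b) x₀ :=
            (continuousAt_inv₀ hx₀pos.ne').sub continuousAt_const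
          have h7 := hc.tendsto.mono_left (nhdsWithin_le_nhds (s := T))
          rw [hinv₀] at h7
          have e1 : ((b:ℕ)+1 : ℝ) - (b:ℝ) = 1 := by push_cast; ring
          rw [show ((((b:ℕ)+1 : ℕ)):ℝ) - ((b:ℕ):ℝ) = 1 by push_cast; ring] at h7
          exact h7
        · filter_upwards [self_mem_nhdsWithin] with x hxT
          obtain ⟨_, h6, h5⟩ := key x hxT
          exact ⟨by linarith, by linarith⟩
      have Htend : Filter.Tendsto (fun x : ℝ => 2^((1:ℤ)-(b:ℤ)) - 2^(-(b:ℤ)) * mink (x⁻¹ - b))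
          (𝓝[T] x₀) (𝓝 (mink x₀)) := by
        have h2 : Filter.Tendsto (fun x : ℝ => mink (x⁻¹ - b)) (𝓝[T] x₀) (𝓝 1) := by
          have := tendsto_mink_one.comp hφ
          exact this
        have h3 := (tendsto_const_nhds (x := (2:ℝ)^((1:ℤ)-(b:ℤ))) (f := 𝓝[T] x₀)).sub
          ((tendsto_const_nhds (x := (2:ℝ)^(-(b:ℤ)))).mul h2)
        rw [mul_one] at h3
        have e2 : (2:ℝ)^((1:ℤ)-(b:ℤ)) - 2^(-(b:ℤ)) = mink x₀ := by
          rw [hmv, two_zpow_one_sub, two_zpow_neg]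
          rw [show ((1:ℤ) - ((b:ℕ)+1 : ℕ)) = -(b:ℤ) by push_cast; ring, two_zpow_neg]
          ring
        rw [e2] at h3
        exact h3
      apply Htend.congr'
      filter_upwards [self_mem_nhdsWithin] with x hxT
      exact (heq x hxT).symm
  have hsub : Icc (0:ℝ) 1 ⊆ Icc (0:ℝ) x₀ ∪ Icc x₀ 1 := by
    intro x hxI
    rcases le_total x x₀ with h | h
    · exact Or.inl ⟨hxI.1, h⟩
    · exact Or.inr ⟨h, hxI.2⟩
  exact (hleft.union hright).mono hsub

lemma contWithin_zero : ContinuousWithinAt mink (Icc (0:ℝ) 1) 0 := by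
  show Filter.Tendsto mink (𝓝[Icc (0:ℝ) 1] 0) (𝓝 (mink 0))
  rw [mink_zero]
  exact tendsto_mink_zero

lemma contWithin_rat : ∀ n : ℕ, ∀ x₀ : ℝ, x₀ ∈ Icc (0:ℝ) 1 → gaussMap^[n] x₀ = 0 →
    ContinuousWithinAt mink (Icc (0:ℝ) 1) x₀ := by
  intro n
  induction n with
  | zero =>
    intro x₀ hx₀ h0
    rw [Function.iterate_zero_apply] at h0
    rw [h0]
    exact contWithin_zero
  | succ n ih =>
    intro x₀ hx₀ h0
    by_cases hx0 : x₀ = 0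
    · rw [hx0]; exact contWithin_zero
    have hx₀pos : 0 < x₀ := lt_of_le_of_ne hx₀.1 (Ne.symm hx0)
    by_cases hg : gaussMap x₀ = 0
    · -- x₀ = 1/a
      have hfr0 : Int.fract x₀⁻¹ = 0 := by rwa [gaussMap_ne hx0] at hg
      have hr1 : (1:ℝ) ≤ x₀⁻¹ := one_le_inv_iff₀.mpr ⟨hx₀pos, hx₀.2⟩
      have hfe : x₀⁻¹ = ((⌊x₀⁻¹⌋:ℤ):ℝ) := by
        have := hfr0
        rw [Int.fract] at this
        linarith
      have hz1 : (1:ℤ) ≤ ⌊x₀⁻¹⌋ := by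
        apply Int.le_floor.mpr
        exact_mod_cast hr1
      have hznn : (0:ℤ) ≤ ⌊x₀⁻¹⌋ := by linarith
      have hzt' : ((⌊x₀⁻¹⌋.toNat : ℤ)) = ⌊x₀⁻¹⌋ := Int.toNat_of_nonneg hznn
      have hzt : ((⌊x₀⁻¹⌋.toNat : ℕ) : ℝ) = ((⌊x₀⁻¹⌋:ℤ):ℝ) := by exact_mod_cast hzt'
      have hxeq : x₀ = ((⌊x₀⁻¹⌋.toNat : ℕ) : ℝ)⁻¹ := by
        rw [hzt, ← hfe, inv_inv]
      have hta : 1 ≤ ⌊x₀⁻¹⌋.toNat := by omega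
      rw [hxeq]
      exact contWithin_inv hta
    · -- reduction step
      have h0' : gaussMap^[n] (gaussMap x₀) = 0 := by
        rw [← Function.iterate_succ_apply]
        exact h0
      have hcw := ih (gaussMap x₀) (Ico_subset_Icc_self (gaussMap_mem _)) h0'
      have hfr : Int.fract x₀⁻¹ ≠ 0 := by rwa [gaussMap_ne hx0] at hg
      obtain ⟨hev, hcg⟩ := eventually_digit0 hx₀pos hfr
      set d : ℕ := ⌊x₀⁻¹⌋₊ with hd
      show Filter.Tendsto mink (𝓝[Icc (0:ℝ) 1] x₀) (𝓝 (mink x₀))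
      have hφ : Filter.Tendsto gaussMap (𝓝[Icc (0:ℝ) 1] x₀) (𝓝[Icc (0:ℝ) 1] (gaussMap x₀)) := by
        rw [tendsto_nhdsWithin_iff]
        constructor
        · exact hcg.tendsto.mono_left nhdsWithin_le_nhds
        · exact Filter.Eventually.of_forall fun x => Ico_subset_Icc_self (gaussMap_mem x)
      have Htend : Filter.Tendsto (fun x : ℝ => 2^((1:ℤ)-(d:ℤ)) - 2^(-(d:ℤ)) * mink (gaussMap x))
          (𝓝[Icc (0:ℝ) 1] x₀) (𝓝 (mink x₀)) := by
        have h2 : Filter.Tendsto (fun x : ℝ => mink (gaussMap x)) (𝓝[Icc (0:ℝ) 1] x₀)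
            (𝓝 (mink (gaussMap x₀))) := by
          have hcw' : Filter.Tendsto mink (𝓝[Icc (0:ℝ) 1] (gaussMap x₀))
              (𝓝 (mink (gaussMap x₀))) := hcw
          exact hcw'.comp hφ
        have h3 := (tendsto_const_nhds (x := (2:ℝ)^((1:ℤ)-(d:ℤ))) (f := 𝓝[Icc (0:ℝ) 1] x₀)).sub
          ((tendsto_const_nhds (x := (2:ℝ)^(-(d:ℤ)))).mul h2)
        have e2 : (2:ℝ)^((1:ℤ)-(d:ℤ)) - 2^(-(d:ℤ)) * mink (gaussMap x₀) = mink x₀ :=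
          (mink_step hx₀ hx0).symm
        rw [e2] at h3
        exact h3
      apply Htend.congr'
      filter_upwards [hev.filter_mono nhdsWithin_le_nhds, self_mem_nhdsWithin] with x hx hxI
      rw [mink_step hxI hx.1, hx.2]

/-- Minkowski's question mark function is continuous on `[0,1]`. -/
theorem mink_continuousOn : ContinuousOn mink (Icc (0 : ℝ) 1) := by
  intro x hx
  by_cases h : ∀ k, gaussMap^[k] x ≠ 0
  · exact contWithin_irr hx h
  · push_neg at h
    obtain ⟨n, hn⟩ := h
    exact contWithin_rat n x hx hn
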